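/- Let ρ, σ be quantum states on ℂ^d with (1/2)‖ρ − σ‖₁ ≤ ε. Then the von Neumann entropy satisfies |S(ρ) − S(σ)| ≤ g(ε) + ε·log d. -/

import Mathlib

open scoped BigOperators ComplexOrder Classical

noncomputable section

/-- Shannon entropy of a finitely supported distribution, with `0 log 0 = 0`. -/
def shannonEntropy {ι : Type*} [Fintype ι] (p : ι → ℝ) : ℝ :=
  -∑ i, p i * Real.log (p i)

/-- A quantum state: positive semidefinite with unit trace. -/
def IsState {n : Type*} [Fintype n] (ρ : Matrix n n ℂ) : Prop :=
  ρ.PosSemidef ∧ ρ.trace = 1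

/-- A POVM: positive semidefinite elements summing to the identity. -/
def IsPOVM {ι n : Type*} [Fintype ι] [Fintype n] [DecidableEq n]
    (M : ι → Matrix n n ℂ) : Prop :=
  (∀ i, (M i).PosSemidef) ∧ ∑ i, M i = 1

/-- Observational entropy `S_M(ρ) = -∑ p_i log (p_i / V_i)`. -/
def obsEntropy {ι n : Type*} [Fintype ι] [Fintype n]
    (M : ι → Matrix n n ℂ) (ρ : Matrix n n ℂ) : ℝ :=
  -∑ i, ((M i * ρ).trace.re * Real.log ((M i * ρ).trace.re / (M i).trace.re))

/-- The function `g(x) = -x log x + (1+x) log(1+x)`. -/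
def gFun (x : ℝ) : ℝ := -(x * Real.log x) + (1 + x) * Real.log (1 + x)

/-- The positive semidefinite square root (Mathlib's former `Matrix.PosSemidef.sqrt`). -/
def Matrix.PosSemidef.sqrt {n 𝕜 : Type*} [Fintype n] [DecidableEq n] [RCLike 𝕜]
    {A : Matrix n n 𝕜} (hA : A.PosSemidef) : Matrix n n 𝕜 :=
  (hA.1.eigenvectorUnitary : Matrix n n 𝕜) *
    Matrix.diagonal ((↑) ∘ (fun x : ℝ => Real.sqrt x) ∘ hA.1.eigenvalues) *
    (star hA.1.eigenvectorUnitary : Matrix n n 𝕜)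

/-- Trace norm of a square complex matrix. -/
def traceNorm {n : Type*} [Fintype n] [DecidableEq n] (X : Matrix n n ℂ) : ℝ :=
  ((Matrix.posSemidef_conjTranspose_mul_self X).sqrt).trace.re

/-- Matrix logarithm of a Hermitian matrix via the spectral decomposition,
with the convention `log 0 = 0` on the kernel; junk value `0` on non-Hermitian input. -/
def matLog {n : Type*} [Fintype n] [DecidableEq n] (A : Matrix n n ℂ) : Matrix n n ℂ :=
  if hA : A.IsHermitian then
    (hA.eigenvectorUnitary : Matrix n n ℂ) *
      Matrix.diagonal (fun i => (Real.log (hA.eigenvalues i) : ℂ)) *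
      (star (hA.eigenvectorUnitary : Matrix n n ℂ))
  else 0

/-- Von Neumann entropy `S(ρ) = -tr(ρ log ρ)`. -/
def vnEntropy {n : Type*} [Fintype n] [DecidableEq n] (ρ : Matrix n n ℂ) : ℝ :=
  -((ρ * matLog ρ).trace.re)

/-- Quantum relative entropy, as an extended real number: `tr(μ (log μ - log ν))` when
`supp μ ⊆ supp ν` (both Hermitian), and `+∞` otherwise. -/
def qRelEntropy {n : Type*} [Fintype n] [DecidableEq n] (μ ν : Matrix n n ℂ) : EReal :=
  if μ.IsHermitian ∧ ν.IsHermitian ∧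
      LinearMap.range (Matrix.toLin' μ) ≤ LinearMap.range (Matrix.toLin' ν) then
    (((μ * (matLog μ - matLog ν)).trace.re : ℝ) : EReal)
  else ⊤

/-- Real-valued quantum relative entropy `tr(μ (log μ - log ν))` (meaningful when
`supp μ ⊆ supp ν`). -/
def qRelEntropyR {n : Type*} [Fintype n] [DecidableEq n] (μ ν : Matrix n n ℂ) : ℝ :=
  (μ * (matLog μ - matLog ν)).trace.re



section AuxContinuity
open Real
variable {n : Type*} [Fintype n] [DecidableEq n]

lemma negMulLog_subadd {x y : ℝ} (hx : 0 ≤ x) (hy : 0 ≤ y) :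
    Real.negMulLog (x + y) ≤ Real.negMulLog x + Real.negMulLog y := by
  rcases eq_or_lt_of_le hx with h | h
  · simp [← h]
  rcases eq_or_lt_of_le hy with h' | h'
  · simp [← h']
  have h1 : x * Real.log x ≤ x * Real.log (x + y) :=
    mul_le_mul_of_nonneg_left (Real.log_le_log h (by linarith)) hx
  have h2 : y * Real.log y ≤ y * Real.log (x + y) :=
    mul_le_mul_of_nonneg_left (Real.log_le_log h' (by linarith)) hy
  simp only [Real.negMulLog, neg_mul]
  nlinarith

lemma negMulLog_div' {c M : ℝ} (hM : 0 < M) :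
    Real.negMulLog (c / M) = (1 / M) * Real.negMulLog c + (c / M) * Real.log M := by
  rw [div_eq_mul_inv, Real.negMulLog_mul]
  simp only [Real.negMulLog, Real.log_inv]
  field_simp

lemma sum_negMulLog_le_log_card {d : ℕ} (hd : 0 < d) (c : Fin d → ℝ)
    (h0 : ∀ i, 0 ≤ c i) (h1 : ∑ i, c i = 1) :
    ∑ i, Real.negMulLog (c i) ≤ Real.log d := by
  have hd' : (0:ℝ) < d := by exact_mod_cast hd
  have key : ∀ i, c i - 1 / d ≤ -(Real.negMulLog (c i)) + c i * Real.log d := by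
    intro i
    rcases eq_or_lt_of_le (h0 i) with h | h
    · simp [← h]
    · have hx : (0:ℝ) < c i * d := by positivity
      have hlog : 1 - (c i * d)⁻¹ ≤ Real.log (c i * d) := by
        have := Real.log_le_sub_one_of_pos (inv_pos.mpr hx)
        rw [Real.log_inv] at this; linarith
      have hinv : c i * (c i * d)⁻¹ = 1 / d := by field_simp
      have : c i * (1 - (c i * d)⁻¹) ≤ c i * Real.log (c i * d) :=
        mul_le_mul_of_nonneg_left hlog (h0 i)
      rw [Real.log_mul (ne_of_gt h) (ne_of_gt hd')] at this
      simp only [Real.negMulLog, neg_mul, neg_neg]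
      nlinarith
  have hsum := Finset.sum_le_sum (fun i (_ : i ∈ Finset.univ) => key i)
  have e1 : ∑ i : Fin d, (c i - 1 / (d:ℝ)) = 0 := by
    rw [Finset.sum_sub_distrib, h1]
    simp only [Finset.sum_const, Finset.card_univ, Fintype.card_fin, nsmul_eq_mul]
    field_simp
    ring
  have e2 : ∑ i : Fin d, (-(Real.negMulLog (c i)) + c i * Real.log d)
      = -(∑ i : Fin d, Real.negMulLog (c i)) + Real.log d := by
    rw [Finset.sum_add_distrib, Finset.sum_neg_distrib, ← Finset.sum_mul, h1, one_mul]
  rw [e1, e2] at hsum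
  linarith


lemma gFun_eq (x : ℝ) : gFun x = Real.negMulLog x - Real.negMulLog (1 + x) := by
  simp only [gFun, Real.negMulLog, neg_mul]; ring

lemma gFun_zero : gFun 0 = 0 := by simp [gFun]

lemma gFun_mono {s e : ℝ} (hs : 0 ≤ s) (hse : s ≤ e) : gFun s ≤ gFun e := by
  have hmono : MonotoneOn gFun (Set.Ici (0:ℝ)) := by
    have hcont : ContinuousOn gFun (Set.Ici (0:ℝ)) := by
      simp only [funext gFun_eq]
      exact (Real.continuous_negMulLog.sub
        (Real.continuous_negMulLog.comp (continuous_const.add continuous_id))).continuousOn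
    have hderiv : ∀ x ∈ interior (Set.Ici (0:ℝ)), 0 ≤ deriv gFun x := by
      intro x hx
      rw [interior_Ici] at hx
      have hx' : (0:ℝ) < x := hx
      have h1x : (1 + x) ≠ 0 := by linarith
      have hd1 : HasDerivAt (fun y => Real.negMulLog (1 + y)) (-Real.log (1+x) - 1) x := by
        have := (Real.hasDerivAt_negMulLog h1x).comp x
          ((hasDerivAt_id x).const_add 1)
        simp only [mul_one] at this; exact this
      have hd : HasDerivAt gFun ((-Real.log x - 1) - (-Real.log (1+x) - 1)) x := by
        simp only [funext gFun_eq]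
        exact (Real.hasDerivAt_negMulLog (ne_of_gt hx')).sub hd1
      rw [hd.deriv]
      have := Real.log_le_log hx' (by linarith : x ≤ 1 + x)
      linarith
    exact monotoneOn_of_deriv_nonneg (convex_Ici 0) hcont
      (fun x hx => by
        rw [interior_Ici] at hx
        have h1x : (1 + x) ≠ 0 := by have : (0:ℝ) < x := hx; linarith
        simp only [funext gFun_eq]
        exact ((Real.differentiableAt_negMulLog (ne_of_gt hx)).sub
          ((Real.differentiableAt_negMulLog h1x).comp x
            ((differentiable_id.const_add 1) x))).differentiableWithinAt) hderiv
  exact hmono hs (le_trans hs hse) hse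


lemma entropy_diff_le {d : ℕ} (hd : 0 < d) (p q : Fin d → ℝ)
    (hp0 : ∀ i, 0 ≤ p i) (hq0 : ∀ i, 0 ≤ q i)
    (hp1 : ∑ i, p i = 1) (hq1 : ∑ i, q i = 1) :
    ∑ i, Real.negMulLog (q i) - ∑ i, Real.negMulLog (p i) ≤
      gFun ((1/2) * ∑ i, |p i - q i|) + ((1/2) * ∑ i, |p i - q i|) * Real.log d := by
  set t : ℝ := (1/2) * ∑ i, |p i - q i| with ht_def
  have ht0 : 0 ≤ t := by positivity
  rcases eq_or_lt_of_le ht0 with ht | ht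
  · -- t = 0 : p = q
    have hz : ∀ i ∈ Finset.univ, |p i - q i| = 0 := by
      rw [← Finset.sum_eq_zero_iff_of_nonneg (fun i _ => abs_nonneg _)]
      have : (2:ℝ) * t = ∑ i, |p i - q i| := by rw [ht_def]; ring
      rw [← this, ← ht]; ring
    have hpq : p = q := by
      funext i
      have := hz i (Finset.mem_univ i)
      have := abs_eq_zero.mp this
      linarith
    rw [hpq, ← ht]
    simp [gFun]
  · -- t > 0
    set a : Fin d → ℝ := fun i => max (p i - q i) 0 with ha_def
    set b : Fin d → ℝ := fun i => max (q i - p i) 0 with hb_def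
    set M : ℝ := 1 + t with hM_def
    have hM0 : (0:ℝ) < M := by linarith
    have ha0 : ∀ i, 0 ≤ a i := fun i => le_max_right _ _
    have hb0 : ∀ i, 0 ≤ b i := fun i => le_max_right _ _
    have hab : ∀ i, a i + b i = |p i - q i| := by
      intro i
      rcases le_total (p i) (q i) with h | h
      · rw [ha_def, hb_def]
        simp only [max_eq_right (sub_nonpos.mpr h), max_eq_left (sub_nonneg.mpr h),
          abs_of_nonpos (sub_nonpos.mpr h)]
        ring
      · rw [ha_def, hb_def]
        simp only [max_eq_left (sub_nonneg.mpr h), max_eq_right (sub_nonpos.mpr h),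
          abs_of_nonneg (sub_nonneg.mpr h)]
        ring
    have hba : ∀ i, b i - a i = q i - p i := by
      intro i
      rcases le_total (p i) (q i) with h | h
      · rw [ha_def, hb_def]
        simp only [max_eq_right (sub_nonpos.mpr h), max_eq_left (sub_nonneg.mpr h)]
        ring
      · rw [ha_def, hb_def]
        simp only [max_eq_left (sub_nonneg.mpr h), max_eq_right (sub_nonpos.mpr h)]
        ring
    have hsum_ab : ∑ i, (a i + b i) = 2 * t := by
      rw [Finset.sum_congr rfl (fun i _ => hab i), ht_def]; ring
    have hsum_ba : ∑ i, (b i - a i) = 0 := by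
      rw [Finset.sum_congr rfl (fun i _ => hba i), Finset.sum_sub_distrib, hq1, hp1]; ring
    rw [Finset.sum_add_distrib] at hsum_ab
    rw [Finset.sum_sub_distrib] at hsum_ba
    have hsa : ∑ i, a i = t := by linarith
    have hsb : ∑ i, b i = t := by linarith
    have hmq : ∀ i, max (p i) (q i) = q i + a i := by
      intro i
      rcases le_total (p i) (q i) with h | h
      · rw [ha_def]; simp only [max_eq_right h, max_eq_right (sub_nonpos.mpr h)]; ring
      · rw [ha_def]; simp only [max_eq_left h, max_eq_left (sub_nonneg.mpr h)]; ring
    have hmp : ∀ i, max (p i) (q i) = p i + b i := by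
      intro i
      rcases le_total (p i) (q i) with h | h
      · rw [hb_def]; simp only [max_eq_right h, max_eq_left (sub_nonneg.mpr h)]; ring
      · rw [hb_def]; simp only [max_eq_left h, max_eq_right (sub_nonpos.mpr h)]; ring
    -- Step A : (1/M) * f(q i) ≤ f (max p q / M)
    have stepA : ∀ i, (1/M) * Real.negMulLog (q i) ≤ Real.negMulLog (max (p i) (q i) / M) := by
      intro i
      have hat : a i ≤ t := by
        rw [← hsa]
        exact Finset.single_le_sum (fun j _ => ha0 j) (Finset.mem_univ i)
      have h1 : (0:ℝ) ≤ a i / t := div_nonneg (ha0 i) (le_of_lt ht)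
      have h2 : a i / t ≤ 1 := (div_le_one ht).mpr hat
      have hconc := Real.concaveOn_negMulLog.2 (Set.mem_Ici.mpr (hq0 i))
        (Set.mem_Ici.mpr h1) (by positivity : (0:ℝ) ≤ 1/M)
        (by positivity : (0:ℝ) ≤ t/M) (by field_simp; rw [hM_def])
      have hcomb : (1/M) • q i + (t/M) • (a i / t) = max (p i) (q i) / M := by
        rw [smul_eq_mul, smul_eq_mul, hmq i]
        field_simp
      rw [hcomb] at hconc
      have hnn : 0 ≤ Real.negMulLog (a i / t) := Real.negMulLog_nonneg h1 h2
      have h3 : (0:ℝ) ≤ t/M := by positivity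
      simp only [smul_eq_mul] at hconc
      nlinarith [hconc, mul_nonneg h3 hnn]
    -- Step B : f (max p q / M) ≤ f (p i / M) + f (b i / M)
    have stepB : ∀ i, Real.negMulLog (max (p i) (q i) / M) ≤
        Real.negMulLog (p i / M) + Real.negMulLog (b i / M) := by
      intro i
      rw [hmp i, add_div]
      exact negMulLog_subadd (div_nonneg (hp0 i) hM0.le) (div_nonneg (hb0 i) hM0.le)
    -- sums
    have SA : (1/M) * ∑ i, Real.negMulLog (q i) ≤ ∑ i, Real.negMulLog (max (p i) (q i) / M) := by
      rw [Finset.mul_sum]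
      exact Finset.sum_le_sum (fun i _ => stepA i)
    have SB : ∑ i, Real.negMulLog (max (p i) (q i) / M) ≤
        ∑ i, Real.negMulLog (p i / M) + ∑ i, Real.negMulLog (b i / M) := by
      rw [← Finset.sum_add_distrib]
      exact Finset.sum_le_sum (fun i _ => stepB i)
    have scaleP : ∑ i, Real.negMulLog (p i / M) =
        (1/M) * ∑ i, Real.negMulLog (p i) + (1/M) * Real.log M := by
      rw [Finset.sum_congr rfl (fun i _ => negMulLog_div' hM0), Finset.sum_add_distrib,
        ← Finset.mul_sum]
      congr 1
      rw [← Finset.sum_mul, ← Finset.sum_div, hp1]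
    have scaleB : ∑ i, Real.negMulLog (b i / M) =
        (1/M) * ∑ i, Real.negMulLog (b i) + (t/M) * Real.log M := by
      rw [Finset.sum_congr rfl (fun i _ => negMulLog_div' hM0), Finset.sum_add_distrib,
        ← Finset.mul_sum]
      congr 1
      rw [← Finset.sum_mul, ← Finset.sum_div, hsb]
    -- bound on ∑ f(b i)
    have Hb : ∑ i, Real.negMulLog (b i) ≤ Real.negMulLog t + t * Real.log d := by
      have hbt : ∀ i, b i = t * (b i / t) := by
        intro i; field_simp
      have expand : ∀ i, Real.negMulLog (b i) =
          (b i / t) * Real.negMulLog t + t * Real.negMulLog (b i / t) := by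
        intro i
        conv_lhs => rw [hbt i]
        exact Real.negMulLog_mul t (b i / t)
      rw [Finset.sum_congr rfl (fun i _ => expand i), Finset.sum_add_distrib,
        ← Finset.sum_mul, ← Finset.sum_div, hsb, div_self (ne_of_gt ht), one_mul,
        ← Finset.mul_sum]
      have hgibbs := sum_negMulLog_le_log_card hd (fun i => b i / t)
        (fun i => div_nonneg (hb0 i) (le_of_lt ht))
        (by rw [← Finset.sum_div, hsb, div_self (ne_of_gt ht)])
      nlinarith [hgibbs]
    -- combine
    have chain : (1/M) * ∑ i, Real.negMulLog (q i) ≤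
        (1/M) * (∑ i, Real.negMulLog (p i) + (1 + t) * Real.log M +
          Real.negMulLog t + t * Real.log d) := by
      have := le_trans SA SB
      rw [scaleP, scaleB] at this
      have expand : (1/M) * (∑ i, Real.negMulLog (p i) + (1 + t) * Real.log M +
          Real.negMulLog t + t * Real.log d) =
          (1/M) * ∑ i, Real.negMulLog (p i) + (1/M) * Real.log M +
          ((1/M) * (Real.negMulLog t + t * Real.log d) + (t/M) * Real.log M) := by
        ring
      rw [expand]
      have hmono : (1/M) * ∑ i, Real.negMulLog (b i) ≤
          (1/M) * (Real.negMulLog t + t * Real.log d) :=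
        mul_le_mul_of_nonneg_left Hb (by positivity)
      linarith
    have final := (mul_le_mul_iff_right₀ (by positivity : (0:ℝ) < 1/M)).mp chain
    have hg : gFun t = Real.negMulLog t + (1 + t) * Real.log (1 + t) := by
      rw [gFun, Real.negMulLog]; ring
    rw [hg, ← hM_def]
    have hMM : M * Real.log M = (1 + t) * Real.log M := by rw [hM_def]
    linarith


lemma trace_conj_unitary (U : Matrix n n ℂ) (hU : star U * U = 1) (D : Matrix n n ℂ) :
    (U * D * star U).trace = D.trace := by
  rw [Matrix.trace_mul_cycle, hU, Matrix.one_mul]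

lemma conj_diag_entry_re (W : Matrix n n ℂ) (f : n → ℝ) (i : n) :
    ((W * Matrix.diagonal (fun j => (f j : ℂ)) * star W) i i).re =
      ∑ j, Complex.normSq (W i j) * f j := by
  rw [Matrix.star_eq_conjTranspose, Matrix.mul_apply]
  rw [Complex.re_sum]
  congr 1
  funext j
  rw [Matrix.mul_diagonal, Matrix.conjTranspose_apply]
  have : W i j * (f j : ℂ) * star (W i j) = ((Complex.normSq (W i j) * f j : ℝ) : ℂ) := by
    rw [mul_comm (W i j) ((f j : ℂ)), mul_assoc]
    rw [show star (W i j) = (starRingEnd ℂ) (W i j) from rfl, Complex.mul_conj]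
    push_cast
    ring
  rw [this, Complex.ofReal_re]

lemma row_sum_normSq (W : Matrix n n ℂ) (hW : W * star W = 1) (i : n) :
    ∑ j, Complex.normSq (W i j) = 1 := by
  have h := congrArg (fun M : Matrix n n ℂ => (M i i).re) hW
  simp only [Matrix.mul_apply, Matrix.star_eq_conjTranspose, Matrix.conjTranspose_apply,
    Matrix.one_apply_eq] at h
  rw [Complex.re_sum, Complex.one_re] at h
  rw [← h]
  congr 1
  funext j
  rw [show star (W i j) = (starRingEnd ℂ) (W i j) from rfl, Complex.mul_conj]
  simp

lemma col_sum_normSq (W : Matrix n n ℂ) (hW : star W * W = 1) (j : n) :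
    ∑ i, Complex.normSq (W i j) = 1 := by
  have h := congrArg (fun M : Matrix n n ℂ => (M j j).re) hW
  simp only [Matrix.mul_apply, Matrix.star_eq_conjTranspose, Matrix.conjTranspose_apply,
    Matrix.one_apply_eq] at h
  rw [Complex.re_sum, Complex.one_re] at h
  rw [← h]
  congr 1
  funext i
  rw [show star (W i j) = (starRingEnd ℂ) (W i j) from rfl, mul_comm, Complex.mul_conj]
  simp

lemma eigU_mul_star (X : Matrix n n ℂ) (hX : X.IsHermitian) :
    (hX.eigenvectorUnitary : Matrix n n ℂ) * star (hX.eigenvectorUnitary : Matrix n n ℂ) = 1 :=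
  Matrix.mem_unitaryGroup_iff.mp hX.eigenvectorUnitary.2

lemma star_mul_eigU (X : Matrix n n ℂ) (hX : X.IsHermitian) :
    star (hX.eigenvectorUnitary : Matrix n n ℂ) * (hX.eigenvectorUnitary : Matrix n n ℂ) = 1 :=
  Matrix.mem_unitaryGroup_iff'.mp hX.eigenvectorUnitary.2

/-- conjugated diagonal entries as doubly-stochastic mixture of eigenvalues -/

lemma conj_entry_eq_mix (X : Matrix n n ℂ) (hX : X.IsHermitian) (V : Matrix n n ℂ)
    (i : n) :
    ((star V * X * V) i i).re =
      ∑ j, Complex.normSq ((star V * (hX.eigenvectorUnitary : Matrix n n ℂ)) i j) *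
        hX.eigenvalues j := by
  set U := (hX.eigenvectorUnitary : Matrix n n ℂ) with hU_def
  have key : star V * X * V =
      (star V * U) * Matrix.diagonal (fun j => (hX.eigenvalues j : ℂ)) * star (star V * U) := by
    conv_lhs => rw [hX.spectral_theorem]
    rw [star_mul, star_star]
    simp only [Matrix.mul_assoc]
    simp only [Unitary.conjStarAlgAut_apply, Unitary.coe_star, Matrix.mul_assoc]
    rfl
  rw [key, conj_diag_entry_re]

lemma conj_mul_conj (U D E : Matrix n n ℂ) (hU2 : star U * U = 1) :
    (U * D * star U) * (U * E * star U) = U * (D * E) * star U := by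
  have h : (U * D * star U) * (U * E * star U)
      = U * (D * ((star U * U) * (E * star U))) := by simp only [Matrix.mul_assoc]
  rw [h, hU2, Matrix.one_mul]
  simp only [Matrix.mul_assoc]

open scoped MatrixOrder in
lemma psd_sqrt_eq_of_sq_eq {A S : Matrix n n ℂ} (hA : A.PosSemidef) (hS : S.PosSemidef)
    (h : S ^ 2 = A) : hA.sqrt = S := by
  have e1 : hA.sqrt = CFC.sqrt A := by
    rw [CFC.sqrt_eq_cfc, cfc_nnreal_eq_real _ A hA.nonneg, hA.1.cfc_eq]
    simp only [Matrix.PosSemidef.sqrt, Matrix.IsHermitian.cfc, Unitary.conjStarAlgAut_apply,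
      Unitary.coe_star]
    congr 2
    ext i j
    simp [Matrix.diagonal_apply, max_eq_left (hA.eigenvalues_nonneg i)]
  rw [e1]
  exact CFC.sqrt_unique (by rw [← h, sq]) hS.nonneg

lemma star_mul_self_mul_eq_diagonal' {X : Matrix n n ℂ} (hX : X.IsHermitian) :
    star (hX.eigenvectorUnitary : Matrix n n ℂ) * X * (hX.eigenvectorUnitary : Matrix n n ℂ) =
      Matrix.diagonal (RCLike.ofReal ∘ hX.eigenvalues) := by
  have := hX.conjStarAlgAut_star_eigenvectorUnitary
  rwa [Unitary.conjStarAlgAut_apply, Unitary.coe_star, star_star] at this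

lemma traceNorm_eq_sum_abs {X : Matrix n n ℂ} (hX : X.IsHermitian) :
    traceNorm X = ∑ i, |hX.eigenvalues i| := by
  set U := (hX.eigenvectorUnitary : Matrix n n ℂ) with hU_def
  have hU1 : U * star U = 1 := eigU_mul_star X hX
  have hU2 : star U * U = 1 := star_mul_eigU X hX
  set S := U * Matrix.diagonal (fun i => ((|hX.eigenvalues i| : ℝ) : ℂ)) * star U with hS_def
  have hSpsd : S.PosSemidef := by
    rw [hS_def, Matrix.star_eq_conjTranspose]
    exact Matrix.PosSemidef.mul_mul_conjTranspose_same
      (Matrix.posSemidef_diagonal_iff.mpr fun i => by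
        rw [Complex.zero_le_real]; exact abs_nonneg _) U
  have hsq : S ^ 2 = X.conjTranspose * X := by
    have hXX : X.conjTranspose * X = X * X := by rw [hX.eq]
    rw [hXX, pow_two, hS_def, conj_mul_conj _ _ _ hU2]
    conv_rhs => rw [hX.spectral_theorem]
    simp only [Unitary.conjStarAlgAut_apply, Unitary.coe_star]
    rw [← hU_def]
    rw [conj_mul_conj _ _ _ hU2]
    rw [Matrix.diagonal_mul_diagonal, Matrix.diagonal_mul_diagonal]
    refine congrArg (fun D => U * D * star U) (congrArg Matrix.diagonal (funext fun i => ?_))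
    show ((|hX.eigenvalues i| : ℝ) : ℂ) * ↑|hX.eigenvalues i|
        = (RCLike.ofReal (hX.eigenvalues i) : ℂ) * RCLike.ofReal (hX.eigenvalues i)
    norm_cast
    exact congrArg Complex.ofReal (abs_mul_abs_self _)
  have hsqrt : (Matrix.posSemidef_conjTranspose_mul_self X).sqrt = S :=
    psd_sqrt_eq_of_sq_eq _ hSpsd hsq
  rw [traceNorm, hsqrt, hS_def, trace_conj_unitary _ hU2, Matrix.trace_diagonal]
  rw [Complex.re_sum]
  exact Finset.sum_congr rfl fun i _ => Complex.ofReal_re _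

lemma vnEntropy_eq {X : Matrix n n ℂ} (hX : X.IsHermitian) :
    vnEntropy X = ∑ i, Real.negMulLog (hX.eigenvalues i) := by
  set U := (hX.eigenvectorUnitary : Matrix n n ℂ) with hU_def
  have hU2 : star U * U = 1 := star_mul_eigU X hX
  have hlog : matLog X =
      U * Matrix.diagonal (fun i => (Real.log (hX.eigenvalues i) : ℂ)) * star U := by
    rw [matLog, dif_pos hX]
  have htr : (X * matLog X).trace
      = (Matrix.diagonal (RCLike.ofReal ∘ hX.eigenvalues) *
          Matrix.diagonal (fun i => (Real.log (hX.eigenvalues i) : ℂ))).trace := by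
    rw [hlog, ← Matrix.mul_assoc, ← Matrix.mul_assoc, Matrix.trace_mul_cycle,
      ← Matrix.mul_assoc]
    congr 1
    congr 1
    rw [hU_def, star_mul_self_mul_eq_diagonal' hX]
  rw [vnEntropy, htr, Matrix.diagonal_mul_diagonal, Matrix.trace_diagonal, Complex.re_sum,
    ← Finset.sum_neg_distrib]
  refine Finset.sum_congr rfl fun i _ => ?_
  have h2 : (RCLike.ofReal (hX.eigenvalues i) : ℂ) * (Real.log (hX.eigenvalues i) : ℂ)
      = ((hX.eigenvalues i * Real.log (hX.eigenvalues i) : ℝ) : ℂ) :=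
    (Complex.ofReal_mul _ _).symm
  rw [Function.comp_apply, h2, Complex.ofReal_re, Real.negMulLog, neg_mul]

lemma psd_diag_re_nonneg {M : Matrix n n ℂ} (hM : M.PosSemidef) (i : n) :
    0 ≤ (M i i).re := by
  exact (Complex.nonneg_iff.mp hM.diag_nonneg).1

lemma trace_re_eq_sum_diag (M : Matrix n n ℂ) : M.trace.re = ∑ i, (M i i).re := by
  rw [Matrix.trace, Complex.re_sum]
  rfl

lemma W_facts {X : Matrix n n ℂ} (hX : X.IsHermitian) (V : Matrix n n ℂ)
    (hV1 : V * star V = 1) (hV2 : star V * V = 1) :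
    (star V * (hX.eigenvectorUnitary : Matrix n n ℂ)) *
      star (star V * (hX.eigenvectorUnitary : Matrix n n ℂ)) = 1 ∧
    star (star V * (hX.eigenvectorUnitary : Matrix n n ℂ)) *
      (star V * (hX.eigenvectorUnitary : Matrix n n ℂ)) = 1 := by
  set U := (hX.eigenvectorUnitary : Matrix n n ℂ) with hU_def
  have hU1 : U * star U = 1 := eigU_mul_star X hX
  have hU2 : star U * U = 1 := star_mul_eigU X hX
  constructor
  · have h : star V * U * star (star V * U) = star V * (U * star U) * V := by
      rw [star_mul, star_star]; simp only [Matrix.mul_assoc]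
    rw [h, hU1, Matrix.mul_one, hV2]
  · have h : star (star V * U) * (star V * U) = star U * (V * star V) * U := by
      rw [star_mul, star_star]; simp only [Matrix.mul_assoc]
    rw [h, hV1, Matrix.mul_one, hU2]

lemma sum_abs_diag_le {X : Matrix n n ℂ} (hX : X.IsHermitian) (V : Matrix n n ℂ)
    (hV1 : V * star V = 1) (hV2 : star V * V = 1) :
    ∑ i, |((star V * X * V) i i).re| ≤ traceNorm X := by
  set U := (hX.eigenvectorUnitary : Matrix n n ℂ) with hU_def
  set W := star V * U with hW_def
  obtain ⟨hW1, hW2⟩ := W_facts hX V hV1 hV2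
  rw [traceNorm_eq_sum_abs hX]
  have step1 : ∀ i, |((star V * X * V) i i).re| ≤
      ∑ j, Complex.normSq (W i j) * |hX.eigenvalues j| := by
    intro i
    rw [conj_entry_eq_mix X hX V i]
    refine (Finset.abs_sum_le_sum_abs _ _).trans ?_
    refine Finset.sum_le_sum fun j _ => ?_
    rw [abs_mul, abs_of_nonneg (Complex.normSq_nonneg _)]
  refine (Finset.sum_le_sum fun i _ => step1 i).trans ?_
  rw [Finset.sum_comm]
  refine le_of_eq ?_
  refine Finset.sum_congr rfl fun j _ => ?_
  rw [← Finset.sum_mul, col_sum_normSq W hW2 j, one_mul]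

lemma pinching {X : Matrix n n ℂ} (hXp : X.PosSemidef) (V : Matrix n n ℂ)
    (hV1 : V * star V = 1) (hV2 : star V * V = 1) :
    ∑ i, Real.negMulLog (hXp.1.eigenvalues i) ≤
      ∑ i, Real.negMulLog ((star V * X * V) i i).re := by
  set U := (hXp.1.eigenvectorUnitary : Matrix n n ℂ) with hU_def
  set W := star V * U with hW_def
  obtain ⟨hW1, hW2⟩ := W_facts hXp.1 V hV1 hV2
  have step1 : ∀ i, ∑ j, Complex.normSq (W i j) * Real.negMulLog (hXp.1.eigenvalues j) ≤
      Real.negMulLog ((star V * X * V) i i).re := by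
    intro i
    rw [conj_entry_eq_mix X hXp.1 V i]
    have := Real.concaveOn_negMulLog.le_map_sum
      (t := Finset.univ) (w := fun j => Complex.normSq (W i j))
      (p := fun j => hXp.1.eigenvalues j)
      (fun j _ => Complex.normSq_nonneg _)
      (row_sum_normSq W hW1 i)
      (fun j _ => Set.mem_Ici.mpr (hXp.eigenvalues_nonneg j))
    simpa only [smul_eq_mul] using this
  calc ∑ j, Real.negMulLog (hXp.1.eigenvalues j)
      = ∑ j, (∑ i, Complex.normSq (W i j)) * Real.negMulLog (hXp.1.eigenvalues j) := by
        refine Finset.sum_congr rfl fun j _ => ?_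
        rw [col_sum_normSq W hW2 j, one_mul]
    _ = ∑ i, ∑ j, Complex.normSq (W i j) * Real.negMulLog (hXp.1.eigenvalues j) := by
        rw [Finset.sum_comm]
        exact Finset.sum_congr rfl fun j _ => by rw [Finset.sum_mul]
    _ ≤ ∑ i, Real.negMulLog ((star V * X * V) i i).re :=
        Finset.sum_le_sum fun i _ => step1 i

lemma sqrt_congr {n : Type*} [Fintype n] [DecidableEq n] {A B : Matrix n n ℂ}
    (h : A = B) (hA : A.PosSemidef) (hB : B.PosSemidef) : hA.sqrt = hB.sqrt := by
  subst h; rfl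

lemma traceNorm_neg {n : Type*} [Fintype n] [DecidableEq n] (X : Matrix n n ℂ) :
    traceNorm (-X) = traceNorm X := by
  have hEq : (-X).conjTranspose * (-X) = X.conjTranspose * X := by
    rw [Matrix.conjTranspose_neg, Matrix.neg_mul, Matrix.mul_neg, neg_neg]
  rw [traceNorm, traceNorm,
    sqrt_congr hEq (Matrix.posSemidef_conjTranspose_mul_self (-X))
      (Matrix.posSemidef_conjTranspose_mul_self X)]

lemma vnEntropy_diff_le {d : ℕ} (hd : 0 < d) (ρ σ : Matrix (Fin d) (Fin d) ℂ)
    (hρ : IsState ρ) (hσ : IsState σ)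
    (ε : ℝ) (hε : (1/2) * traceNorm (ρ - σ) ≤ ε) :
    vnEntropy ρ - vnEntropy σ ≤ gFun ε + ε * Real.log d := by
  have hlogd : (0:ℝ) ≤ Real.log d :=
    Real.log_nonneg (by exact_mod_cast Nat.one_le_iff_ne_zero.mpr (Nat.pos_iff_ne_zero.mp hd))
  set V := (hσ.1.1.eigenvectorUnitary : Matrix (Fin d) (Fin d) ℂ) with hV_def
  have hV1 : V * star V = 1 := eigU_mul_star σ hσ.1.1
  have hV2 : star V * V = 1 := star_mul_eigU σ hσ.1.1
  set p : Fin d → ℝ := fun i => ((star V * ρ * V) i i).re with hp_def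
  set q : Fin d → ℝ := fun i => hσ.1.1.eigenvalues i with hq_def
  have hconjρ : (star V * ρ * V).PosSemidef := by
    have := hρ.1.conjTranspose_mul_mul_same V
    rwa [← Matrix.star_eq_conjTranspose] at this
  have hp0 : ∀ i, 0 ≤ p i := fun i => psd_diag_re_nonneg hconjρ i
  have htrconj : ∀ A : Matrix (Fin d) (Fin d) ℂ, (star V * A * V).trace = A.trace := by
    intro A
    have h := trace_conj_unitary (star V) (by rw [star_star]; exact hV1) A
    rwa [star_star] at h
  have hp1 : ∑ i, p i = 1 := by
    rw [hp_def, ← trace_re_eq_sum_diag, htrconj ρ, hρ.2, Complex.one_re]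
  have hq0 : ∀ i, 0 ≤ q i := fun i => hσ.1.eigenvalues_nonneg i
  have hdiagσ : star V * σ * V = Matrix.diagonal (RCLike.ofReal ∘ hσ.1.1.eigenvalues) :=
    star_mul_self_mul_eq_diagonal' hσ.1.1
  have hqd : ∀ i, q i = ((star V * σ * V) i i).re := by
    intro i
    rw [hdiagσ, Matrix.diagonal_apply_eq, Function.comp_apply]
    exact (Complex.ofReal_re _).symm
  have hq1 : ∑ i, q i = 1 := by
    rw [Finset.sum_congr rfl fun i _ => hqd i, ← trace_re_eq_sum_diag, htrconj σ, hσ.2,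
      Complex.one_re]
  -- the trace-distance bound
  have hXh : (ρ - σ).IsHermitian := hρ.1.1.sub hσ.1.1
  have hdiff : ∀ i, p i - q i = ((star V * (ρ - σ) * V) i i).re := by
    intro i
    rw [hp_def, hqd i]
    rw [Matrix.mul_sub, Matrix.sub_mul, Matrix.sub_apply, Complex.sub_re]
  have ht : (1/2) * ∑ i, |p i - q i| ≤ ε := by
    have h1 : ∑ i, |p i - q i| ≤ traceNorm (ρ - σ) := by
      rw [Finset.sum_congr rfl fun i _ => congrArg abs (hdiff i)]
      exact sum_abs_diag_le hXh V hV1 hV2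
    linarith
  have ht0 : (0:ℝ) ≤ (1/2) * ∑ i, |p i - q i| := by positivity
  -- entropies
  have hSρ : vnEntropy ρ ≤ ∑ i, Real.negMulLog (p i) := by
    rw [vnEntropy_eq hρ.1.1]
    exact pinching hρ.1 V hV1 hV2
  have hSσ : vnEntropy σ = ∑ i, Real.negMulLog (q i) := vnEntropy_eq hσ.1.1
  have hclass := entropy_diff_le hd q p hq0 hp0 hq1 hp1
  have habs : ∑ i, |q i - p i| = ∑ i, |p i - q i| :=
    Finset.sum_congr rfl fun i _ => abs_sub_comm _ _
  rw [habs] at hclass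
  have hmono : gFun ((1/2) * ∑ i, |p i - q i|) + ((1/2) * ∑ i, |p i - q i|) * Real.log d ≤
      gFun ε + ε * Real.log d := by
    have := gFun_mono ht0 ht
    have h2 : ((1/2) * ∑ i, |p i - q i|) * Real.log d ≤ ε * Real.log d :=
      mul_le_mul_of_nonneg_right ht hlogd
    linarith
  linarith


end AuxContinuity

theorem vnEntropy_continuity {d : ℕ} (ρ σ : Matrix (Fin d) (Fin d) ℂ)
    (hρ : IsState ρ) (hσ : IsState σ)
    (ε : ℝ) (hε : (1/2) * traceNorm (ρ - σ) ≤ ε) :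
    |vnEntropy ρ - vnEntropy σ| ≤ gFun ε + ε * Real.log d := by
  have hd : 0 < d := by
    by_contra h
    have hd0 : d = 0 := by omega
    subst hd0
    have := hρ.2
    simp [Matrix.trace] at this
  have hε' : (1/2) * traceNorm (σ - ρ) ≤ ε := by
    rw [show σ - ρ = -(ρ - σ) from (neg_sub ρ σ).symm, traceNorm_neg]
    exact hε
  rw [abs_sub_le_iff]
  exact ⟨vnEntropy_diff_le hd ρ σ hρ hσ ε hε, vnEntropy_diff_le hd σ ρ hσ hρ ε hε'⟩
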